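/- Let G be a group and γ an anti-automorphism of G. Then G is chiral (there exists d and w ∈ F_d with G_w ≠ (G_w)⁻¹, equivalently G_w ≠ G_{w⁻¹}) if and only if G is γ-chiral (there exists d and w ∈ F_d with G_w ≠ γ(G_w)). -/

import Mathlib

/-- `f` is an anti-automorphism of the group `G`. -/
def IsAntiAut {G : Type*} [Group G] (f : G → G) : Prop :=
  Function.Bijective f ∧ ∀ a b : G, f (a * b) = f b * f a

/-- The image of the word map of `w` on `G`. -/
def wordImage {d : ℕ} (G : Type*) [Group G] (w : FreeGroup (Fin d)) : Set G :=
  Set.range fun g : Fin d → G => (FreeGroup.lift g) w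

lemma gamma_image_eq {G : Type*} [Group G] (γ : G → G) (hγ : IsAntiAut γ)
    {d : ℕ} (w : FreeGroup (Fin d)) :
    γ '' wordImage G w = wordImage G w⁻¹ := by
  obtain ⟨hbij, hmul⟩ := hγ
  have h1 : γ 1 = 1 := by
    have := hmul 1 1
    simp only [mul_one] at this
    exact (mul_eq_left.mp this.symm)
  -- φ x = (γ x)⁻¹ is a group hom
  let φ : G →* G :=
    { toFun := fun x => (γ x)⁻¹
      map_one' := by simp [h1]
      map_mul' := fun a b => by simp [hmul a b] }
  have hφbij : Function.Bijective φ := by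
    have : (φ : G → G) = Inv.inv ∘ γ := rfl
    rw [this]
    exact (inv_involutive.bijective).comp hbij
  have key : ∀ g : Fin d → G, γ ((FreeGroup.lift g) w) = (FreeGroup.lift (φ ∘ g) w)⁻¹ := by
    intro g
    have : φ.comp (FreeGroup.lift g) = FreeGroup.lift (φ ∘ g) := by
      ext x
      simp
    have h2 : φ ((FreeGroup.lift g) w) = (FreeGroup.lift (φ ∘ g)) w := by
      rw [← this]; rfl
    have : (γ ((FreeGroup.lift g) w))⁻¹ = (FreeGroup.lift (φ ∘ g)) w := h2
    rw [← this, inv_inv]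
  ext x
  simp only [wordImage, Set.mem_image, Set.mem_range]
  constructor
  · rintro ⟨y, ⟨g, rfl⟩, rfl⟩
    exact ⟨φ ∘ g, by rw [map_inv, ← key g]⟩
  · rintro ⟨g, rfl⟩
    obtain ⟨g', hg'⟩ : ∃ g' : Fin d → G, φ ∘ g' = g := by
      refine ⟨fun i => (hφbij.surjective (g i)).choose, ?_⟩
      funext i
      exact (hφbij.surjective (g i)).choose_spec
    refine ⟨(FreeGroup.lift g') w, ⟨g', rfl⟩, ?_⟩
    rw [key g', hg', map_inv]

theorem group_chiral_iff_gammaChiral (G : Type*) [Group G]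
    (γ : G → G) (hγ : IsAntiAut γ) :
    (∃ (d : ℕ) (w : FreeGroup (Fin d)), wordImage G w ≠ wordImage G w⁻¹) ↔
      (∃ (d : ℕ) (w : FreeGroup (Fin d)), wordImage G w ≠ γ '' wordImage G w) := by
  constructor
  · rintro ⟨d, w, h⟩
    exact ⟨d, w, by rw [gamma_image_eq γ hγ]; exact h⟩
  · rintro ⟨d, w, h⟩
    exact ⟨d, w, by rw [← gamma_image_eq γ hγ]; exact h⟩
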